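/- Uniqueness of the fundamental solution of the heat equation on graphs: Let K be a graph of bounded valence and fix a vertex y. Then the function (x,t) ↦ p_t(x,y) = (e^{-tΔ}δ_x, δ_y) is the unique bounded nonnegative function v(x,t) on K × [0,∞), differentiable in t, satisfying Δ_x v + ∂v/∂t = 0 for all x and t > 0 and the initial condition v(x,0) = δ_y(x). -/

import Mathlib

set_option maxHeartbeats 1000000
set_option synthInstance.maxHeartbeats 400000

/-- The combinatorial Laplacian on real-valued functions. -/
noncomputable def combLap {V : Type*} (G : SimpleGraph V) [G.LocallyFinite]
    (f : V → ℝ) (v : V) : ℝ :=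
  ∑ w ∈ G.neighborFinset v, (f v - f w)

section Aux

/-- coordinate evaluation as a continuous linear map on `ℓ²(V)` -/
noncomputable def evCLM {V : Type*} (x : V) : lp (fun _ : V => ℝ) 2 →L[ℝ] ℝ :=
  LinearMap.mkContinuous
    { toFun := fun f => f x
      map_add' := fun f g => by simp [lp.coeFn_add]
      map_smul' := fun c f => by simp [lp.coeFn_smul] }
    1 (fun f => by
      rw [one_mul]; exact lp.norm_apply_le_norm (by norm_num : (2:ENNReal) ≠ 0) f x)

@[simp] lemma evCLM_apply {V : Type*} (x : V) (f : lp (fun _ : V => ℝ) 2) :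
    evCLM x f = f x := rfl

lemma heatDeriv {V : Type*} (A : lp (fun _ : V => ℝ) 2 →L[ℝ] lp (fun _ : V => ℝ) 2)
    (g : lp (fun _ : V => ℝ) 2) (x : V) (t : ℝ) :
    HasDerivAt (fun s : ℝ => NormedSpace.exp (-s • A) g x)
      (-(A (NormedSpace.exp (-t • A) g) x)) t := by
  have h1 := _root_.hasDerivAt_exp_smul_const' (𝕂 := ℝ) A (-t)
  have h2 : HasDerivAt (fun s : ℝ => -s) (-1 : ℝ) t := (hasDerivAt_id t).neg
  have h3 := HasDerivAt.scomp (𝕜 := ℝ) t h1 h2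
  set L : (lp (fun _ : V => ℝ) 2 →L[ℝ] lp (fun _ : V => ℝ) 2) →L[ℝ] ℝ :=
    (evCLM x).comp (ContinuousLinearMap.apply ℝ (lp (fun _ : V => ℝ) 2) g) with hL
  have h4 := (L.hasFDerivAt).comp_hasDerivAt t h3
  convert h4 using 1
  · rfl
  · rfl
  · funext s; simp [hL, neg_smul]
  simp [hL, ContinuousLinearMap.mul_apply]

noncomputable abbrev Hlp (V : Type*) := lp (fun _ : V => ℝ) 2

lemma heat_pos_le_one {V : Type*} [DecidableEq V]
    (G : SimpleGraph V) [G.LocallyFinite]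
    (M : ℕ) (hM : ∀ v, G.degree v ≤ M)
    (A : lp (fun _ : V => ℝ) 2 →L[ℝ] lp (fun _ : V => ℝ) 2)
    (hA : ∀ (f : lp (fun _ : V => ℝ) 2) (v : V), A f v = combLap G (⇑f) v)
    (g : lp (fun _ : V => ℝ) 2) (hg : ∀ z, 0 ≤ g z ∧ g z ≤ 1)
    (t : ℝ) (ht : 0 ≤ t) (x : V) :
    0 ≤ NormedSpace.exp (-t • A) g x ∧ NormedSpace.exp (-t • A) g x ≤ 1 := by
  classical
  set B : Hlp V →L[ℝ] Hlp V := (M : ℝ) • (1 : Hlp V →L[ℝ] Hlp V) - A with hB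
  -- pointwise action of B
  have hBpt : ∀ (f : Hlp V) (z : V), B f z = ((M : ℝ) - G.degree z) * f z
      + ∑ w ∈ G.neighborFinset z, f w := by
    intro f z
    have : B f z = (M : ℝ) * f z - A f z := by
      simp [hB, ContinuousLinearMap.sub_apply, ContinuousLinearMap.smul_apply,
        lp.coeFn_smul, Pi.smul_apply, smul_eq_mul, lp.coeFn_sub, Pi.sub_apply]
      exact rfl
    rw [this, hA]
    unfold combLap
    rw [Finset.sum_sub_distrib, Finset.sum_const, G.card_neighborFinset_eq_degree]
    ring
  -- B^n g is pointwise in [0, M^n]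
  have hBn : ∀ n : ℕ, ∀ z, 0 ≤ ((B ^ n) g) z ∧ ((B ^ n) g) z ≤ (M : ℝ) ^ n := by
    intro n
    induction n with
    | zero => intro z; simpa using hg z
    | succ n ih =>
      intro z
      have hpow : (B ^ (n + 1)) g = B ((B ^ n) g) := by
        rw [pow_succ']; simp [ContinuousLinearMap.mul_apply]
      have hdeg : (G.degree z : ℝ) ≤ (M : ℝ) := by exact_mod_cast hM z
      have hMn : (0:ℝ) ≤ (M : ℝ) ^ n := by positivity
      constructor
      · rw [hpow, hBpt]
        have h1 : 0 ≤ ((M : ℝ) - G.degree z) * ((B ^ n) g) z :=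
          mul_nonneg (by linarith) (ih z).1
        have h2 : 0 ≤ ∑ w ∈ G.neighborFinset z, ((B ^ n) g) w :=
          Finset.sum_nonneg fun w _ => (ih w).1
        linarith
      · rw [hpow, hBpt]
        have h1 : ((M : ℝ) - G.degree z) * ((B ^ n) g) z
            ≤ ((M : ℝ) - G.degree z) * (M : ℝ) ^ n :=
          mul_le_mul_of_nonneg_left (ih z).2 (by linarith)
        have h2 : ∑ w ∈ G.neighborFinset z, ((B ^ n) g) w
            ≤ ∑ w ∈ G.neighborFinset z, (M : ℝ) ^ n :=
          Finset.sum_le_sum fun w _ => (ih w).2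
        rw [Finset.sum_const, G.card_neighborFinset_eq_degree] at h2
        have : (G.degree z : ℝ) * (M:ℝ)^n ≤ (M:ℝ) * (M:ℝ)^n := by
          apply mul_le_mul_of_nonneg_right hdeg hMn
        calc ((M : ℝ) - G.degree z) * ((B ^ n) g) z + ∑ w ∈ G.neighborFinset z, ((B ^ n) g) w
            ≤ ((M : ℝ) - G.degree z) * (M : ℝ) ^ n + (G.degree z : ℝ) * (M:ℝ)^n := by
              gcongr <;> simp_all
          _ ≤ (M:ℝ)^(n+1) := by rw [pow_succ]; nlinarith
  -- split the exponential
  have hcomm : Commute ((-t * M) • (1 : Hlp V →L[ℝ] Hlp V)) (t • B) := by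
    have e1 : ((-t * (M:ℝ)) • (1 : Hlp V →L[ℝ] Hlp V)) * (t • B)
        = (-t * (M:ℝ)) • (t • B) := by
      rw [smul_mul_assoc, one_mul]
    have e2 : (t • B) * ((-t * (M:ℝ)) • (1 : Hlp V →L[ℝ] Hlp V))
        = (-t * (M:ℝ)) • (t • B) := by
      rw [mul_smul_comm, mul_one]
    show _ * _ = _ * _
    rw [e1, e2]
  have hsplit : -t • A = (-t * (M:ℝ)) • (1 : Hlp V →L[ℝ] Hlp V) + t • B := by
    rw [hB, smul_sub]
    module
  have hexp : NormedSpace.exp (-t • A)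
      = Real.exp (-t * M) • NormedSpace.exp (t • B) := by
    let +nondep : NormedAlgebra ℚ (Hlp V →L[ℝ] Hlp V) := .restrictScalars ℚ ℝ _
    rw [hsplit, NormedSpace.exp_add_of_commute hcomm]
    have h1 : NormedSpace.exp ((-t * (M:ℝ)) • (1 : Hlp V →L[ℝ] Hlp V))
        = Real.exp (-t * M) • (1 : Hlp V →L[ℝ] Hlp V) := by
      rw [← Algebra.algebraMap_eq_smul_one, ← NormedSpace.algebraMap_exp_comm,
        Real.exp_eq_exp_ℝ, Algebra.algebraMap_eq_smul_one]
    rw [h1, smul_mul_assoc, one_mul]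
  -- pointwise series for exp(t•B) g x
  set L : (Hlp V →L[ℝ] Hlp V) →L[ℝ] ℝ :=
    (evCLM x).comp (ContinuousLinearMap.apply ℝ (Hlp V) g) with hLdef
  have hser : NormedSpace.exp (t • B) g x
      = ∑' n : ℕ, ((n.factorial : ℝ)⁻¹ * t ^ n) * ((B ^ n) g x) := by
    have h0 : NormedSpace.exp (t • B) g x = L (NormedSpace.exp (t • B)) := rfl
    rw [h0, NormedSpace.exp_eq_tsum ℝ]
    rw [L.map_tsum (NormedSpace.expSeries_summable' (𝕂 := ℝ) (t • B))]
    congr 1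
    ext n
    simp [hLdef, smul_pow, mul_assoc, ContinuousLinearMap.smul_apply]
  have hterm : ∀ n : ℕ, 0 ≤ ((n.factorial : ℝ)⁻¹ * t ^ n) * ((B ^ n) g x) := by
    intro n
    exact mul_nonneg (mul_nonneg (by positivity) (by positivity)) (hBn n x).1
  have hsumm : Summable fun n : ℕ => ((n.factorial : ℝ)⁻¹ * t ^ n) * ((B ^ n) g x) := by
    have := (NormedSpace.expSeries_summable' (𝕂 := ℝ) (t • B)).map L L.continuous
    refine this.congr fun n => ?_
    simp [hLdef, smul_pow, mul_assoc, ContinuousLinearMap.smul_apply]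
  have hub : NormedSpace.exp (t • B) g x ≤ Real.exp (t * M) := by
    rw [hser]
    have hexpR : Real.exp (t * M) = ∑' n : ℕ, (t * M) ^ n / n.factorial := by
      rw [Real.exp_eq_exp_ℝ, NormedSpace.exp_eq_tsum_div]
    rw [hexpR]
    refine Summable.tsum_le_tsum (fun n => ?_) hsumm (Real.summable_pow_div_factorial _)
    have := (hBn n x).2
    rw [mul_pow]
    rw [div_eq_inv_mul]
    calc ((n.factorial : ℝ)⁻¹ * t ^ n) * ((B ^ n) g x)
        ≤ ((n.factorial : ℝ)⁻¹ * t ^ n) * (M:ℝ)^n := by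
          apply mul_le_mul_of_nonneg_left this (by positivity)
      _ = (n.factorial : ℝ)⁻¹ * (t ^ n * (M:ℝ) ^ n) := by ring
  have hlb : 0 ≤ NormedSpace.exp (t • B) g x := by
    rw [hser]; exact tsum_nonneg hterm
  have happ : NormedSpace.exp (-t • A) g x
      = Real.exp (-t * M) * NormedSpace.exp (t • B) g x := by
    rw [hexp]
    simp [ContinuousLinearMap.smul_apply, lp.coeFn_smul]
  rw [happ]
  constructor
  · exact mul_nonneg (Real.exp_nonneg _) hlb
  · calc Real.exp (-t * M) * NormedSpace.exp (t • B) g x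
        ≤ Real.exp (-t * M) * Real.exp (t * M) :=
          mul_le_mul_of_nonneg_left hub (Real.exp_nonneg _)
      _ = 1 := by rw [← Real.exp_add]; ring_nf; exact Real.exp_zero

lemma combLap_sub {V : Type*} (G : SimpleGraph V) [G.LocallyFinite]
    (f g : V → ℝ) (x : V) :
    combLap G (fun z => f z - g z) x = combLap G f x - combLap G g x := by
  unfold combLap
  rw [← Finset.sum_sub_distrib]
  congr 1; ext w; ring

lemma combLap_abs_le {V : Type*} (G : SimpleGraph V) [G.LocallyFinite]
    (M : ℕ) (hM : ∀ v, G.degree v ≤ M)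
    (f : V → ℝ) (x : V) (b : ℝ) (hb : ∀ z, |f z| ≤ b) :
    |combLap G f x| ≤ 2 * M * b := by
  unfold combLap
  calc |∑ w ∈ G.neighborFinset x, (f x - f w)|
      ≤ ∑ w ∈ G.neighborFinset x, |f x - f w| := Finset.abs_sum_le_sum_abs _ _
    _ ≤ ∑ w ∈ G.neighborFinset x, (2 * b) := by
        refine Finset.sum_le_sum fun w _ => ?_
        calc |f x - f w| ≤ |f x| + |f w| := abs_sub _ _
          _ ≤ 2 * b := by have := hb x; have := hb w; linarith
    _ = (G.degree x : ℝ) * (2 * b) := by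
        rw [Finset.sum_const, G.card_neighborFinset_eq_degree]; simp [mul_comm]
    _ ≤ 2 * M * b := by
        have h1 : (G.degree x : ℝ) ≤ M := by exact_mod_cast hM x
        have hb0 : 0 ≤ b := le_trans (abs_nonneg _) (hb x)
        nlinarith

/-- Gronwall-type iteration: a bounded solution of the heat equation on a graph
of bounded valence vanishing at `t = 0` is identically zero. -/
lemma heat_uniqueness_zero {V : Type*} (G : SimpleGraph V) [G.LocallyFinite]
    (M : ℕ) (hM : ∀ v, G.degree v ≤ M)
    (u : V → ℝ → ℝ)
    (hcont : ∀ x, ContinuousOn (u x) (Set.Ici 0))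
    (hderiv : ∀ x, ∀ t : ℝ, 0 < t →
      HasDerivAt (u x) (-(combLap G (fun z => u z t) x)) t)
    (hzero : ∀ x, u x 0 = 0)
    (C : ℝ) (hC0 : 0 ≤ C) (hC : ∀ x, ∀ t : ℝ, 0 ≤ t → |u x t| ≤ C) :
    ∀ x, ∀ t : ℝ, 0 ≤ t → u x t = 0 := by
  set K : ℝ := 2 * M with hK
  have hK0 : (0:ℝ) ≤ K := by positivity
  -- main claim by induction
  have claim : ∀ n : ℕ, ∀ x, ∀ t : ℝ, 0 ≤ t → ∀ δ : ℝ, 0 < δ →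
      |u x t| ≤ C * (K * t) ^ n / n.factorial + δ := by
    intro n
    induction n with
    | zero =>
      intro x t ht δ hδ
      simpa using le_trans (hC x t ht) (by linarith)
    | succ n ih =>
      intro x t ht δ hδ
      rcases eq_or_lt_of_le ht with h0 | hpos
      · rw [← h0, hzero]
        have : (0:ℝ) ≤ C * (K * 0) ^ (n+1) / (n+1).factorial := by positivity
        simpa using by linarith
      -- t > 0
      set δ' : ℝ := δ / (K * t + 1) with hδ'def
      have hKt1 : 0 < K * t + 1 := by nlinarith
      have hδ' : 0 < δ' := div_pos hδ hKt1
      -- choose ε with 0 < ε ≤ t and |u x ε| ≤ δ'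
      obtain ⟨ε, hε0, hεt, hεu⟩ : ∃ ε : ℝ, 0 < ε ∧ ε ≤ t ∧ |u x ε| ≤ δ' := by
        have hc : ContinuousWithinAt (u x) (Set.Ici 0) 0 :=
          (hcont x) 0 Set.self_mem_Ici
        have htend : Filter.Tendsto (u x) (nhdsWithin 0 (Set.Ioi 0)) (nhds 0) := by
          have h := hc.tendsto
          rw [hzero x] at h
          exact h.mono_left (nhdsWithin_mono 0 Set.Ioi_subset_Ici_self)
        have hev : ∀ᶠ s in nhdsWithin 0 (Set.Ioi 0), |u x s| ≤ δ' := by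
          have := htend.eventually (eventually_abs_sub_lt 0 hδ')
          filter_upwards [this] with s hs
          simpa using hs.le
        have hmem : Set.Ioc (0:ℝ) t ∈ nhdsWithin 0 (Set.Ioi 0) :=
          Ioc_mem_nhdsGT_of_mem ⟨le_rfl, hpos⟩
        obtain ⟨ε, hε1, hε2⟩ := (hev.and (Filter.eventually_iff_exists_mem.mpr
          ⟨_, hmem, fun s hs => hs⟩)).exists
        exact ⟨ε, hε2.1, hε2.2, hε1⟩
      -- the comparison function
      set Bf : ℝ → ℝ := fun s => C * (K * s) ^ (n+1) / (n+1).factorial + δ' * (K * s) + δ'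
        with hBf
      set Bf' : ℝ → ℝ := fun s => K * (C * (K * s) ^ n / n.factorial + δ') with hBf'
      have hBderiv : ∀ s : ℝ, HasDerivAt Bf (Bf' s) s := by
        intro s
        have h1 : HasDerivAt (fun s : ℝ => K * s) (K * 1) s := (hasDerivAt_id s).const_mul K
        have hp := h1.pow (n+1)
        have hfull := ((hp.const_mul C).div_const ((n+1).factorial : ℝ)).add
          ((h1.const_mul δ').add_const δ')
        convert hfull using 1
        · rfl
        · rfl
        · funext s'
          simp only [hBf, Pi.add_apply, Pi.pow_apply]
          ring
        · simp only [hBf']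
          have hfac : ((n+1).factorial : ℝ) = (n+1) * n.factorial := by
            rw [Nat.factorial_succ]; push_cast; ring
          rw [hfac]
          have hnfac : (n.factorial : ℝ) ≠ 0 := by positivity
          simp only [Nat.add_sub_cancel, Nat.cast_add, Nat.cast_one]
          field_simp
      have hbound : ∀ s ∈ Set.Ico ε t, ‖-(combLap G (fun z => u z s) x)‖ ≤ Bf' s := by
        intro s hs
        have hs0 : (0:ℝ) ≤ s := le_trans hε0.le hs.1
        rw [norm_neg, Real.norm_eq_abs]
        have hb : ∀ z, |u z s| ≤ C * (K * s) ^ n / n.factorial + δ' :=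
          fun z => ih z s hs0 δ' hδ'
        have := combLap_abs_le G M hM (fun z => u z s) x _ hb
        calc |combLap G (fun z => u z s) x|
            ≤ 2 * M * (C * (K * s) ^ n / n.factorial + δ') := this
          _ = Bf' s := by rw [hBf', hK]
      have hstart : ‖u x ε‖ ≤ Bf ε := by
        rw [Real.norm_eq_abs, hBf]
        have h1 : (0:ℝ) ≤ C * (K * ε) ^ (n+1) / (n+1).factorial := by positivity
        have h2 : (0:ℝ) ≤ δ' * (K * ε) := by positivity
        linarith
      have hfin := image_norm_le_of_norm_deriv_right_le_deriv_boundary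
        ((hcont x).mono (fun s hs => le_trans hε0.le hs.1))
        (fun s hs => (hderiv x s (lt_of_lt_of_le hε0 hs.1)).hasDerivWithinAt)
        hstart hBderiv hbound (Set.right_mem_Icc.mpr hεt)
      rw [Real.norm_eq_abs] at hfin
      simp only [hBf] at hfin
      have hδeq : δ' * (K * t) + δ' = δ := by
        rw [hδ'def]
        field_simp
      linarith
  -- conclude
  intro x t ht
  have hle : ∀ n : ℕ, |u x t| ≤ C * (K * t) ^ n / n.factorial := by
    intro n
    refine le_of_forall_pos_le_add fun δ hδ => claim n x t ht δ hδ
  have htend : Filter.Tendsto (fun n : ℕ => C * (K * t) ^ n / n.factorial)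
      Filter.atTop (nhds 0) := by
    have := FloorSemiring.tendsto_pow_div_factorial_atTop (K := ℝ) (K * t)
    have h2 := this.const_mul C
    simpa [mul_div_assoc] using h2
  have h0 : |u x t| ≤ 0 := ge_of_tendsto' htend hle
  exact abs_eq_zero.mp (le_antisymm h0 (abs_nonneg _))

end Aux

/-- Uniqueness of the fundamental solution of the heat equation on a graph of
bounded valence: `p_t(x,y) = (e^{-tΔ} δ_y)(x)` is the unique bounded nonnegative
solution of `Δ_x v + ∂v/∂t = 0` with initial condition `v(x,0) = δ_y(x)`. -/
theorem heat_kernel_unique_fundamental_solution {V : Type*} [DecidableEq V]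
    (G : SimpleGraph V) [G.LocallyFinite] (hconn : G.Connected)
    (M : ℕ) (hM : ∀ v, G.degree v ≤ M)
    (A : lp (fun _ : V => ℝ) 2 →L[ℝ] lp (fun _ : V => ℝ) 2)
    (hA : ∀ (f : lp (fun _ : V => ℝ) 2) (v : V), A f v = combLap G (⇑f) v)
    (y : V) :
    -- the heat kernel is a bounded nonnegative solution ...
    ((∀ x, ContinuousOn (fun t : ℝ => NormedSpace.exp (-t • A) (lp.single 2 y 1) x)
        (Set.Ici 0)) ∧
      (∀ x, ∀ t : ℝ, 0 < t →
        HasDerivAt (fun s : ℝ => NormedSpace.exp (-s • A) (lp.single 2 y 1) x)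
          (-(combLap G (fun z => NormedSpace.exp (-t • A) (lp.single 2 y 1) z) x)) t) ∧
      (∀ x, NormedSpace.exp (-(0 : ℝ) • A) (lp.single 2 y 1) x =
        if x = y then 1 else 0) ∧
      (∀ x, ∀ t : ℝ, 0 ≤ t → 0 ≤ NormedSpace.exp (-t • A) (lp.single 2 y 1) x) ∧
      (∃ N : ℝ, ∀ x, ∀ t : ℝ, 0 ≤ t →
        |NormedSpace.exp (-t • A) (lp.single 2 y 1) x| ≤ N)) ∧
    -- ... and it is the unique such solution
    (∀ v : V → ℝ → ℝ,
      (∀ x, ContinuousOn (v x) (Set.Ici 0)) →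
      (∀ x, ∀ t : ℝ, 0 < t →
        HasDerivAt (v x) (-(combLap G (fun z => v z t) x)) t) →
      (∀ x, v x 0 = if x = y then 1 else 0) →
      (∀ x, ∀ t : ℝ, 0 ≤ t → 0 ≤ v x t) →
      (∃ N : ℝ, ∀ x, ∀ t : ℝ, 0 ≤ t → |v x t| ≤ N) →
      ∀ x, ∀ t : ℝ, 0 ≤ t → v x t = NormedSpace.exp (-t • A) (lp.single 2 y 1) x) := by
  classical
  set g : lp (fun _ : V => ℝ) 2 := lp.single 2 y 1 with hg
  have hgpt : ∀ z, g z = if z = y then 1 else 0 := by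
    intro z
    by_cases h : z = y
    · subst h; simp [hg, lp.single_apply_self]
    · simp [hg, lp.single_apply_ne 2 y _ h, h]
  have hg01 : ∀ z, 0 ≤ g z ∧ g z ≤ 1 := by
    intro z; rw [hgpt z]; split <;> norm_num
  -- derivative of the heat kernel, in combLap form
  have hkderiv : ∀ x, ∀ t : ℝ,
      HasDerivAt (fun s : ℝ => NormedSpace.exp (-s • A) g x)
        (-(combLap G (fun z => NormedSpace.exp (-t • A) g z) x)) t := by
    intro x t
    have h := heatDeriv A g x t
    rwa [hA] at h
  -- continuity of the heat kernel in t
  have hkcont : ∀ x, ContinuousOn (fun t : ℝ => NormedSpace.exp (-t • A) g x)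
      (Set.Ici 0) := by
    intro x
    have : Continuous (fun t : ℝ => NormedSpace.exp (-t • A) g x) := by
      rw [continuous_iff_continuousAt]
      exact fun t => (hkderiv x t).continuousAt
    exact this.continuousOn
  -- initial value
  have hkzero : ∀ x, NormedSpace.exp (-(0 : ℝ) • A) g x = if x = y then 1 else 0 := by
    intro x
    have h0 : -(0:ℝ) • A = 0 := by simp
    rw [h0, NormedSpace.exp_zero, ContinuousLinearMap.one_apply, hgpt]
  -- nonnegativity and boundedness
  have hkpos : ∀ x, ∀ t : ℝ, 0 ≤ t → 0 ≤ NormedSpace.exp (-t • A) g x ∧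
      NormedSpace.exp (-t • A) g x ≤ 1 :=
    fun x t ht => heat_pos_le_one G M hM A hA g hg01 t ht x
  refine ⟨⟨hkcont, fun x t _ => hkderiv x t, hkzero, fun x t ht => (hkpos x t ht).1,
    ⟨1, fun x t ht => abs_le.mpr ⟨by linarith [(hkpos x t ht).1], (hkpos x t ht).2⟩⟩⟩, ?_⟩
  -- uniqueness
  rintro v hvcont hvderiv hvzero hvpos ⟨N, hvbd⟩ x t ht
  have hN0 : 0 ≤ N := le_trans (abs_nonneg _) (hvbd y 0 le_rfl)
  set u : V → ℝ → ℝ := fun z s => v z s - NormedSpace.exp (-s • A) g z with hu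
  have hucont : ∀ z, ContinuousOn (u z) (Set.Ici 0) :=
    fun z => (hvcont z).sub (hkcont z)
  have huderiv : ∀ z, ∀ s : ℝ, 0 < s →
      HasDerivAt (u z) (-(combLap G (fun w => u w s) z)) s := by
    intro z s hs
    have h := (hvderiv z s hs).sub (hkderiv z s)
    have heq : -(combLap G (fun w => v w s) z)
        - -(combLap G (fun w => NormedSpace.exp (-s • A) g w) z)
        = -(combLap G (fun w => u w s) z) := by
      rw [hu]
      rw [combLap_sub G (fun w => v w s) (fun w => NormedSpace.exp (-s • A) g w) z]
      ring
    rwa [heq] at h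
  have huzero : ∀ z, u z 0 = 0 := by
    intro z
    rw [hu]
    simp only
    rw [hvzero z]
    have := hkzero z
    simp only [neg_zero, zero_smul] at this ⊢
    rw [this]
    ring
  have hubd : ∀ z, ∀ s : ℝ, 0 ≤ s → |u z s| ≤ N + 1 := by
    intro z s hs
    have h1 := hvbd z s hs
    have h2 := hkpos z s hs
    rw [hu]
    simp only
    rw [abs_sub_comm]
    have : |NormedSpace.exp (-s • A) g z - v z s|
        ≤ |NormedSpace.exp (-s • A) g z| + |v z s| := abs_sub _ _
    have h3 : |NormedSpace.exp (-s • A) g z| ≤ 1 := abs_le.mpr ⟨by linarith [h2.1], h2.2⟩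
    linarith
  have := heat_uniqueness_zero G M hM u hucont huderiv huzero (N + 1)
    (by linarith) hubd x t ht
  rw [hu] at this
  simp only at this
  linarith
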